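/- arXiv:0907.0558 — 6 statements merged into one kernel-verified Lean document; each statement's English description precedes it below -/
import Mathlib

section
/- Let Q₁, …, Q_ℓ ∈ ℝ^N be pairwise distinct, assume a_{ij} ≥ 0 for all i ≠ j, and assume a_{i₀j₀} > 0 for some i₀ ≠ j₀. Then the system of criticality equations Σ_{j≠i} a_{ij}·(Q_i − Q_j)/|Q_i − Q_j| = 0 for all i = 1, …, ℓ cannot hold; indeed, multiplying the i-th equation by Q_i and summing yields Σ_{i<j} a_{ij}|Q_i − Q_j| ≥ a_{i₀j₀} > 0. -/
open Finset

theorem no_critical_config_nonneg_coeffs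
    (ℓ N : ℕ) (hℓ : 2 ≤ ℓ) (hN : 1 ≤ N)
    (a : Fin ℓ → Fin ℓ → ℝ) (hsym : ∀ i j, a i j = a j i)
    (Q : Fin ℓ → EuclideanSpace ℝ (Fin N))
    (hdist : ∀ i j, i ≠ j → Q i ≠ Q j)
    (hnonneg : ∀ i j, i ≠ j → 0 ≤ a i j)
    (i₀ j₀ : Fin ℓ) (hij : i₀ ≠ j₀) (ha : 0 < a i₀ j₀) :
    ¬ (∀ i, ∑ j ∈ Finset.univ.erase i,
        (a i j / ‖Q i - Q j‖) • (Q i - Q j) = (0 : EuclideanSpace ℝ (Fin N))) ∧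
    ((∀ i, ∑ j ∈ Finset.univ.erase i,
        (a i j / ‖Q i - Q j‖) • (Q i - Q j) = (0 : EuclideanSpace ℝ (Fin N))) →
      a i₀ j₀ ≤ ∑ i, ∑ j ∈ Finset.univ.filter (fun j => i < j), a i j * ‖Q i - Q j‖) := by
  have key : ¬ (∀ i, ∑ j ∈ Finset.univ.erase i,
      (a i j / ‖Q i - Q j‖) • (Q i - Q j) = (0 : EuclideanSpace ℝ (Fin N))) := by
    intro h
    set f : Fin ℓ → Fin ℓ → ℝ :=
      fun i j => (a i j / ‖Q i - Q j‖) * (inner ℝ (Q i - Q j) (Q i) : ℝ) with hf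
    have hzero : ∀ i, ∑ j ∈ Finset.univ.erase i, f i j = 0 := by
      intro i
      have h1 : (inner ℝ (∑ j ∈ Finset.univ.erase i,
          (a i j / ‖Q i - Q j‖) • (Q i - Q j)) (Q i) : ℝ) = 0 := by
        rw [h i]; simp
      rw [sum_inner] at h1
      simpa [hf, inner_smul_left] using h1
    have hswap : ∑ i, ∑ j ∈ Finset.univ.erase i, f j i
        = ∑ i, ∑ j ∈ Finset.univ.erase i, f i j := by
      rw [Finset.sum_comm' (t := fun i => Finset.univ.erase i)
        (s' := fun j => Finset.univ.erase j) (t' := Finset.univ)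
        (fun i j => by simp [ne_comm, eq_comm])]
    have hpair : ∀ i j, i ≠ j → f i j + f j i = a i j * ‖Q i - Q j‖ := by
      intro i j hne
      have hd : ‖Q i - Q j‖ ≠ 0 := by
        simpa [sub_eq_zero] using hdist i j hne
      have hrev : ‖Q j - Q i‖ = ‖Q i - Q j‖ := norm_sub_rev _ _
      have hinner : (inner ℝ (Q i - Q j) (Q i) : ℝ) - (inner ℝ (Q i - Q j) (Q j) : ℝ)
          = ‖Q i - Q j‖ ^ 2 := by
        rw [← inner_sub_right, real_inner_self_eq_norm_sq]
      have hji : (inner ℝ (Q j - Q i) (Q j) : ℝ) = - (inner ℝ (Q i - Q j) (Q j) : ℝ) := by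
        rw [← inner_neg_left]; congr 1; abel
      rw [hf]
      simp only [hrev, hji, ← hsym i j]
      have : a i j / ‖Q i - Q j‖ * (inner ℝ (Q i - Q j) (Q i) : ℝ)
          + a i j / ‖Q i - Q j‖ * (-(inner ℝ (Q i - Q j) (Q j) : ℝ))
          = a i j / ‖Q i - Q j‖ * ((inner ℝ (Q i - Q j) (Q i) : ℝ)
            - (inner ℝ (Q i - Q j) (Q j) : ℝ)) := by ring
      rw [this, hinner]
      field_simp
    have hsum : ∑ i, ∑ j ∈ Finset.univ.erase i, (f i j + f j i) = 0 := by
      simp only [Finset.sum_add_distrib]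
      rw [hswap]
      simp [hzero]
    have hsum' : ∑ i, ∑ j ∈ Finset.univ.erase i, a i j * ‖Q i - Q j‖ = 0 := by
      rw [← hsum]
      refine Finset.sum_congr rfl fun i _ => Finset.sum_congr rfl fun j hj => ?_
      exact (hpair i j (Ne.symm (Finset.mem_erase.mp hj).1)).symm
    have hpos : 0 < ∑ i, ∑ j ∈ Finset.univ.erase i, a i j * ‖Q i - Q j‖ := by
      refine Finset.sum_pos' (fun i _ => Finset.sum_nonneg fun j hj => ?_) ⟨i₀, by simp, ?_⟩
      · have hne : i ≠ j := fun e => (Finset.mem_erase.mp hj).1 e.symm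
        exact mul_nonneg (hnonneg i j hne) (norm_nonneg _)
      · refine Finset.sum_pos' (fun j hj => ?_) ⟨j₀, ?_, ?_⟩
        · have hne : i₀ ≠ j := fun e => (Finset.mem_erase.mp hj).1 e.symm
          exact mul_nonneg (hnonneg i₀ j hne) (norm_nonneg _)
        · exact Finset.mem_erase.mpr ⟨Ne.symm hij, Finset.mem_univ _⟩
        · exact mul_pos ha (by simpa [sub_eq_zero] using hdist i₀ j₀ hij)
    exact absurd hsum' (ne_of_gt hpos)
  exact ⟨key, fun h => absurd h key⟩
end

section
/- There exists a constant C > 0 such that for all z, ξ ∈ ℝ^N with |ξ| ≥ 1: w(z + ξ) ≤ C·w(ξ)·(1 + |z|)^{(N−1)/2}·e^{|z|}. -/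
open Filter Set Real

theorem bump_ratio_bound
    (N : ℕ) (hN : 2 ≤ N)
    (W : ℝ → ℝ) (hW_cont : ContinuousOn W (Ici 0))
    (hW_pos : ∀ r ∈ Ici (0 : ℝ), 0 < W r)
    (A : ℝ) (hA : 0 < A)
    (hW_asym : Tendsto (fun r => r ^ (((N : ℝ) - 1) / 2) * Real.exp r * W r)
      atTop (nhds A))
    (w : EuclideanSpace ℝ (Fin N) → ℝ) (hw : ∀ x, w x = W ‖x‖) :
    ∃ C > (0 : ℝ), ∀ z ξ : EuclideanSpace ℝ (Fin N), 1 ≤ ‖ξ‖ →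
      w (z + ξ) ≤ C * W ‖ξ‖ * (1 + ‖z‖) ^ (((N : ℝ) - 1) / 2) * Real.exp ‖z‖ := by
  set a : ℝ := ((N : ℝ) - 1) / 2 with ha_def
  have haN : (2:ℝ) ≤ (N:ℝ) := by exact_mod_cast hN
  have ha : 0 ≤ a := by rw [ha_def]; linarith
  set g : ℝ → ℝ := fun r => r ^ a * Real.exp r * W r with hg_def
  have hev : ∀ᶠ r in atTop, g r ∈ Ioo (A/2) (2*A) :=
    hW_asym.eventually (isOpen_Ioo.mem_nhds ⟨by linarith, by linarith⟩)
  obtain ⟨T0, hT0⟩ := eventually_atTop.mp hev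
  set T : ℝ := max T0 1 with hT_def
  have h1T : (1:ℝ) ≤ T := le_max_right _ _
  have hg_cont : ContinuousOn g (Icc 1 T) := by
    apply ContinuousOn.mul
    · apply ContinuousOn.mul
      · intro x hx
        exact (Real.continuousAt_rpow_const x a
          (Or.inl (by linarith [hx.1] : x ≠ 0))).continuousWithinAt
      · exact Real.continuous_exp.continuousOn
    · exact hW_cont.mono (fun x hx => le_trans zero_le_one hx.1)
  have hne : (Icc (1:ℝ) T).Nonempty := ⟨1, left_mem_Icc.mpr h1T⟩
  obtain ⟨r0, hr0, hmin⟩ := isCompact_Icc.exists_isMinOn hne hg_cont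
  obtain ⟨r1, hr1, hmax⟩ := isCompact_Icc.exists_isMaxOn hne hg_cont
  have hgpos : ∀ r : ℝ, 1 ≤ r → 0 < g r := by
    intro r hr
    have hr0' : (0:ℝ) < r := lt_of_lt_of_le one_pos hr
    exact mul_pos (mul_pos (Real.rpow_pos_of_pos hr0' a) (Real.exp_pos r))
      (hW_pos r (le_of_lt hr0'))
  set c : ℝ := min (g r0) (A/2) with hc_def
  set B : ℝ := max (g r1) (2*A) with hB_def
  have hc : 0 < c := lt_min (hgpos r0 hr0.1) (by linarith)
  have hB : 0 < B := lt_of_lt_of_le (by linarith) (le_max_right _ _)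
  have hbound : ∀ t : ℝ, 1 ≤ t → c ≤ g t ∧ g t ≤ B := by
    intro t ht
    rcases le_total t T with h | h
    · exact ⟨le_trans (min_le_left _ _) (isMinOn_iff.mp hmin t ⟨ht, h⟩),
        le_trans (isMaxOn_iff.mp hmax t ⟨ht, h⟩) (le_max_left _ _)⟩
    · have hmem := hT0 t (le_trans (le_max_left T0 1) h)
      exact ⟨le_trans (min_le_right _ _) hmem.1.le,
        le_trans hmem.2.le (le_max_right _ _)⟩
  obtain ⟨rM, hrM, hMax⟩ := isCompact_Icc.exists_isMaxOn
    (⟨0, left_mem_Icc.mpr zero_le_one⟩ : (Icc (0:ℝ) 1).Nonempty)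
    (hW_cont.mono Icc_subset_Ici_self)
  set M : ℝ := W rM with hM_def
  have hM : 0 < M := hW_pos rM hrM.1
  set C : ℝ := (B + M * Real.exp 1) / c with hC_def
  have hC : 0 < C := div_pos (by positivity) hc
  have hCc : C * c = B + M * Real.exp 1 := div_mul_cancel₀ _ (ne_of_gt hc)
  refine ⟨C, hC, ?_⟩
  intro z ξ hξ
  rw [hw]
  set t : ℝ := ‖ξ‖ with ht_def
  set s : ℝ := ‖z + ξ‖ with hs_def
  set u : ℝ := ‖z‖ with hu_def
  have hu : 0 ≤ u := norm_nonneg _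
  have hs0 : 0 ≤ s := norm_nonneg _
  have ht0 : (0:ℝ) < t := lt_of_lt_of_le one_pos hξ
  have hts : t ≤ s + u := by
    have hξeq : ξ = (z + ξ) - z := by abel
    calc t = ‖(z + ξ) - z‖ := by rw [ht_def, ← hξeq]
      _ ≤ s + u := norm_sub_le _ _
  have hgt := hbound t hξ
  have hWt_pos : 0 < W t := hW_pos t ht0.le
  have h1u : (0:ℝ) < 1 + u := by linarith
  have hgt_eq : g t = t ^ a * Real.exp t * W t := rfl
  rcases le_or_gt 1 s with hs | hs
  · -- case s ≥ 1
    have hgs := hbound s hs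
    have hs0' : (0:ℝ) < s := lt_of_lt_of_le one_pos hs
    have hQ : 0 < s ^ a * Real.exp s :=
      mul_pos (Real.rpow_pos_of_pos hs0' a) (Real.exp_pos s)
    rw [← mul_le_mul_iff_of_pos_right hQ]
    have key : t ^ a * Real.exp t ≤ (1+u) ^ a * Real.exp u * (s ^ a * Real.exp s) := by
      have h1 : t ≤ s * (1 + u) := by nlinarith
      have h2 : t ^ a ≤ (s * (1+u)) ^ a := Real.rpow_le_rpow ht0.le h1 ha
      rw [Real.mul_rpow hs0'.le h1u.le] at h2
      have h3 : Real.exp t ≤ Real.exp s * Real.exp u := by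
        rw [← Real.exp_add]; exact Real.exp_le_exp.mpr hts
      calc t ^ a * Real.exp t
          ≤ (s ^ a * (1+u) ^ a) * (Real.exp s * Real.exp u) :=
            mul_le_mul h2 h3 (Real.exp_pos t).le (by positivity)
        _ = (1+u) ^ a * Real.exp u * (s ^ a * Real.exp s) := by ring
    calc W s * (s ^ a * Real.exp s) = g s := by rw [hg_def]; ring
      _ ≤ B := hgs.2
      _ ≤ C * c := by rw [hCc]; nlinarith [Real.exp_pos 1]
      _ ≤ C * g t := mul_le_mul_of_nonneg_left hgt.1 hC.le
      _ = C * W t * (t ^ a * Real.exp t) := by rw [hgt_eq]; ring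
      _ ≤ C * W t * ((1+u) ^ a * Real.exp u * (s ^ a * Real.exp s)) :=
          mul_le_mul_of_nonneg_left key (by positivity)
      _ = C * W t * (1+u) ^ a * Real.exp u * (s ^ a * Real.exp s) := by ring
  · -- case s < 1
    have hWs : W s ≤ M := isMaxOn_iff.mp hMax s ⟨hs0, hs.le⟩
    have hP : 0 < t ^ a * Real.exp t :=
      mul_pos (Real.rpow_pos_of_pos ht0 a) (Real.exp_pos t)
    rw [← mul_le_mul_iff_of_pos_right hP]
    have ht1u : t ≤ 1 + u := by linarith
    have h2 : t ^ a ≤ (1+u) ^ a := Real.rpow_le_rpow ht0.le ht1u ha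
    have h3 : Real.exp t ≤ Real.exp (1 + u) := Real.exp_le_exp.mpr ht1u
    calc W s * (t ^ a * Real.exp t)
        ≤ M * (t ^ a * Real.exp t) := mul_le_mul_of_nonneg_right hWs hP.le
      _ ≤ M * ((1+u) ^ a * Real.exp (1+u)) := by
          apply mul_le_mul_of_nonneg_left _ hM.le
          exact mul_le_mul h2 h3 (Real.exp_pos t).le (by positivity)
      _ = M * Real.exp 1 * ((1+u) ^ a * Real.exp u) := by
          rw [Real.exp_add]; ring
      _ ≤ C * c * ((1+u) ^ a * Real.exp u) := by
          apply mul_le_mul_of_nonneg_right _ (by positivity)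
          rw [hCc]; linarith
      _ ≤ C * g t * ((1+u) ^ a * Real.exp u) :=
          mul_le_mul_of_nonneg_right (mul_le_mul_of_nonneg_left hgt.1 hC.le)
            (by positivity)
      _ = C * W t * (1+u) ^ a * Real.exp u * (t ^ a * Real.exp t) := by
          rw [hgt_eq]; ring
end

section
/- There exists a constant C > 0 such that w(z)·w(z + ξ) ≤ C·w(ξ) for all z, ξ ∈ ℝ^N. -/
open Filter Set Real

theorem bump_product_bound
    (N : ℕ) (hN : 2 ≤ N)
    (W : ℝ → ℝ) (hW_cont : ContinuousOn W (Ici 0))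
    (hW_pos : ∀ r ∈ Ici (0 : ℝ), 0 < W r)
    (A : ℝ) (hA : 0 < A)
    (hW_asym : Tendsto (fun r => r ^ (((N : ℝ) - 1) / 2) * Real.exp r * W r)
      atTop (nhds A))
    (w : EuclideanSpace ℝ (Fin N) → ℝ) (hw : ∀ x, w x = W ‖x‖) :
    ∃ C > (0 : ℝ), ∀ z ξ : EuclideanSpace ℝ (Fin N),
      w z * w (z + ξ) ≤ C * w ξ := by
  have hN2 : (2:ℝ) ≤ (N:ℝ) := by exact_mod_cast hN
  set α : ℝ := ((N:ℝ) - 1)/2 with hαdef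
  have hα : 0 < α := by rw [hαdef]; linarith
  -- eventual two-sided bound from the asymptotic
  have hev : ∀ᶠ r in atTop, r ^ α * Real.exp r * W r ∈ Set.Ioo (A/2) (3*A/2) :=
    hW_asym.eventually_mem (Ioo_mem_nhds (by linarith) (by linarith))
  obtain ⟨R₀, hR₀⟩ := eventually_atTop.1 hev
  set R : ℝ := max R₀ 1 with hRdef
  have hR1 : (1:ℝ) ≤ R := le_max_right _ _
  have hR0 : (0:ℝ) < R := by linarith
  have hlow : ∀ r, R ≤ r → A/2 ≤ r ^ α * Real.exp r * W r := fun r hr =>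
    (hR₀ r (le_trans (le_max_left _ _) hr)).1.le
  have hhigh : ∀ r, R ≤ r → r ^ α * Real.exp r * W r ≤ 3*A/2 := fun r hr =>
    (hR₀ r (le_trans (le_max_left _ _) hr)).2.le
  -- compact bounds on [0, 2R]
  have hIcc : Icc (0:ℝ) (2*R) ⊆ Ici 0 := Icc_subset_Ici_self
  have hne : (Icc (0:ℝ) (2*R)).Nonempty := ⟨0, by constructor <;> linarith⟩
  obtain ⟨xM, hxM, hM⟩ := (isCompact_Icc).exists_isMaxOn hne (hW_cont.mono hIcc)
  obtain ⟨xm, hxm, hm⟩ := (isCompact_Icc).exists_isMinOn hne (hW_cont.mono hIcc)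
  set M := W xM with hMdef
  set m := W xm with hmdef
  have hMpos : 0 < M := hW_pos xM (hIcc hxM)
  have hmpos : 0 < m := hW_pos xm (hIcc hxm)
  set K : ℝ := max (3*A/2) (M * Real.exp (2*R)) with hKdef
  have hKpos : 0 < K := lt_of_lt_of_le (by linarith) (le_max_left _ _)
  -- global exponential upper bound
  have hK : ∀ r, 0 ≤ r → W r ≤ K * Real.exp (-r) := by
    intro r hr
    rcases le_or_gt r (2*R) with h | h
    · have h1 : W r ≤ M := hM ⟨hr, h⟩
      have h2 : M * Real.exp (2*R) * Real.exp (-r) = M * Real.exp (2*R - r) := by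
        rw [show 2*R - r = 2*R + (-r) by ring, Real.exp_add]; ring
      have h3 : (1:ℝ) ≤ Real.exp (2*R - r) := Real.one_le_exp (by linarith)
      have h4 : M ≤ M * Real.exp (2*R - r) := le_mul_of_one_le_right hMpos.le h3
      calc W r ≤ M := h1
        _ ≤ M * Real.exp (2*R - r) := h4
        _ = M * Real.exp (2*R) * Real.exp (-r) := h2.symm
        _ ≤ K * Real.exp (-r) :=
            mul_le_mul_of_nonneg_right (le_max_right _ _) (Real.exp_pos _).le
    · have hrR : R ≤ r := by linarith
      have hr1 : (1:ℝ) ≤ r := by linarith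
      have hu := hhigh r hrR
      have hrα : (1:ℝ) ≤ r ^ α := by
        calc (1:ℝ) = 1 ^ α := (Real.one_rpow α).symm
          _ ≤ r ^ α := Real.rpow_le_rpow (by norm_num) hr1 hα.le
      have hwr : 0 < W r := hW_pos r (mem_Ici.mpr (by linarith))
      have h5 : Real.exp r * W r ≤ 3*A/2 := by
        calc Real.exp r * W r = 1 * (Real.exp r * W r) := by ring
          _ ≤ r ^ α * (Real.exp r * W r) :=
              mul_le_mul_of_nonneg_right hrα (by positivity)
          _ = r ^ α * Real.exp r * W r := by ring
          _ ≤ 3*A/2 := hu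
      have h6 : W r ≤ (3*A/2) * Real.exp (-r) := by
        have h7 := mul_le_mul_of_nonneg_right h5 (Real.exp_pos (-r)).le
        have h8 : Real.exp r * W r * Real.exp (-r) = W r := by
          rw [show Real.exp r * W r * Real.exp (-r)
              = Real.exp r * Real.exp (-r) * W r by ring, ← Real.exp_add]
          simp
        rw [h8] at h7
        exact h7
      calc W r ≤ (3*A/2) * Real.exp (-r) := h6
        _ ≤ K * Real.exp (-r) :=
          mul_le_mul_of_nonneg_right (le_max_left _ _) (Real.exp_pos _).le
  set C2 : ℝ := 3 * 2 ^ α * K with hC2def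
  have h2α : (0:ℝ) < 2 ^ α := Real.rpow_pos_of_pos (by norm_num) α
  have hC2pos : 0 < C2 := by rw [hC2def]; positivity
  -- main inequality, case ordered and c large
  have main2 : ∀ a b c : ℝ, 0 ≤ b → b ≤ a → 0 ≤ c → c ≤ a + b → 2*R < c →
      W a * W b ≤ C2 * W c := by
    intro a b c hb hba hc hcab hc2R
    have ha : 0 ≤ a := le_trans hb hba
    have haR : R < a := by linarith
    have hc0 : 0 < c := by linarith
    have ha0 : 0 < a := by linarith
    have hwa : 0 < W a := hW_pos a (mem_Ici.mpr ha)
    have hwb : 0 < W b := hW_pos b (mem_Ici.mpr hb)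
    have hwc : 0 < W c := hW_pos c (mem_Ici.mpr hc)
    have f1 : a ^ α * Real.exp a * W a ≤ 3*A/2 := hhigh a haR.le
    have f2 : W b ≤ K * Real.exp (-b) := hK b hb
    have f3 : A/2 ≤ c ^ α * Real.exp c * W c := hlow c (by linarith)
    have f4 : c ^ α ≤ 2 ^ α * a ^ α := by
      calc c ^ α ≤ (2*a) ^ α := Real.rpow_le_rpow hc0.le (by linarith) hα.le
        _ = 2 ^ α * a ^ α := Real.mul_rpow (by norm_num) ha
    have hcα : 0 < c ^ α := Real.rpow_pos_of_pos hc0 α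
    have hec : Real.exp (c - a) * Real.exp a = Real.exp c := by
      rw [← Real.exp_add]; congr 1; ring
    have key : c ^ α * Real.exp c * (W a * W b) ≤ 2 ^ α * (3*A/2) * K := by
      calc c ^ α * Real.exp c * (W a * W b)
          ≤ (2 ^ α * a ^ α) * Real.exp c * (W a * W b) := by
            apply mul_le_mul_of_nonneg_right _ (by positivity)
            exact mul_le_mul_of_nonneg_right f4 (Real.exp_pos c).le
        _ = 2 ^ α * (a ^ α * Real.exp a * W a) * (Real.exp (c - a) * W b) := by
            rw [← hec]; ring
        _ ≤ 2 ^ α * (3*A/2) * (Real.exp (c - a) * (K * Real.exp (-b))) := by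
            apply mul_le_mul
            · exact mul_le_mul_of_nonneg_left f1 h2α.le
            · exact mul_le_mul_of_nonneg_left f2 (Real.exp_pos _).le
            · positivity
            · positivity
        _ = 2 ^ α * (3*A/2) * K * (Real.exp (c - a) * Real.exp (-b)) := by ring
        _ = 2 ^ α * (3*A/2) * K * Real.exp (c - a - b) := by
            rw [show c - a - b = (c - a) + (-b) by ring, Real.exp_add]
        _ ≤ 2 ^ α * (3*A/2) * K * 1 := by
            apply mul_le_mul_of_nonneg_left _ (by positivity)
            exact Real.exp_le_one_iff.mpr (by linarith)
        _ = 2 ^ α * (3*A/2) * K := by ring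
    have step : c ^ α * Real.exp c * (W a * W b)
        ≤ c ^ α * Real.exp c * (C2 * W c) := by
      calc c ^ α * Real.exp c * (W a * W b) ≤ 2 ^ α * (3*A/2) * K := key
        _ = C2 * (A/2) := by rw [hC2def]; ring
        _ ≤ C2 * (c ^ α * Real.exp c * W c) := mul_le_mul_of_nonneg_left f3 hC2pos.le
        _ = c ^ α * Real.exp c * (C2 * W c) := by ring
    exact le_of_mul_le_mul_left step (by positivity)
  -- main inequality, all cases
  have main : ∀ a b c : ℝ, 0 ≤ a → 0 ≤ b → 0 ≤ c → c ≤ a + b →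
      W a * W b ≤ max (K^2/m) C2 * W c := by
    intro a b c ha hb hc hcab
    have hwc : 0 < W c := hW_pos c (mem_Ici.mpr hc)
    rcases le_or_gt c (2*R) with h | h
    · have hma : W a ≤ K := by
        calc W a ≤ K * Real.exp (-a) := hK a ha
          _ ≤ K * 1 := mul_le_mul_of_nonneg_left
              (Real.exp_le_one_iff.mpr (by linarith)) hKpos.le
          _ = K := by ring
      have hmb : W b ≤ K := by
        calc W b ≤ K * Real.exp (-b) := hK b hb
          _ ≤ K * 1 := mul_le_mul_of_nonneg_left
              (Real.exp_le_one_iff.mpr (by linarith)) hKpos.le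
          _ = K := by ring
      have hmc : m ≤ W c := hm ⟨hc, h⟩
      have hwb : 0 ≤ W b := (hW_pos b (mem_Ici.mpr hb)).le
      calc W a * W b ≤ K * K := mul_le_mul hma hmb hwb hKpos.le
        _ = (K^2/m) * m := by rw [div_mul_cancel₀ _ hmpos.ne']; ring
        _ ≤ (K^2/m) * W c := mul_le_mul_of_nonneg_left hmc (by positivity)
        _ ≤ max (K^2/m) C2 * W c :=
            mul_le_mul_of_nonneg_right (le_max_left _ _) hwc.le
    · rcases le_total b a with hba | hab
      · calc W a * W b ≤ C2 * W c := main2 a b c hb hba hc hcab h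
          _ ≤ max (K^2/m) C2 * W c :=
              mul_le_mul_of_nonneg_right (le_max_right _ _) hwc.le
      · calc W a * W b = W b * W a := by ring
          _ ≤ C2 * W c := main2 b a c ha hab hc (by linarith) h
          _ ≤ max (K^2/m) C2 * W c :=
              mul_le_mul_of_nonneg_right (le_max_right _ _) hwc.le
  refine ⟨max (K^2/m) C2, lt_of_lt_of_le hC2pos (le_max_right _ _), ?_⟩
  intro z ξ
  rw [hw z, hw (z + ξ), hw ξ]
  apply main _ _ _ (norm_nonneg _) (norm_nonneg _) (norm_nonneg _)
  calc ‖ξ‖ = ‖z + ξ - z‖ := by rw [add_sub_cancel_left]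
    _ ≤ ‖z + ξ‖ + ‖z‖ := norm_sub_le _ _
    _ = ‖z‖ + ‖z + ξ‖ := by ring
end

section
/- For every ρ ≥ 0 the integral ξ(ρ) := ∫_{ℝ^N} f(w(x))·w(x + ρe₁) dx is absolutely convergent, the integral c := ∫_{ℝ^N} f(w(x))·e^{−x₁} dx is absolutely convergent, and ξ(ρ)/W(ρ) → c as ρ → +∞ (here e₁ is the first standard basis vector and x₁ the first coordinate of x). -/
open Filter Set Real MeasureTheory

lemma IIL.bdd_of_tendsto {g : ℝ → ℝ} (hc : ContinuousOn g (Ici 0))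
    (h : Tendsto g atTop (nhds 0)) : ∃ K, 0 < K ∧ ∀ r, 0 ≤ r → g r ≤ K := by
  obtain ⟨R, hR⟩ := eventually_atTop.1 (h.eventually_le_const one_pos)
  set R' : ℝ := max R 0 with hR'
  obtain ⟨r0, hr0, hmax⟩ := isCompact_Icc.exists_isMaxOn (nonempty_Icc.2 (le_max_right R 0))
    (hc.mono (fun y hy => hy.1))
  refine ⟨max (g r0) 1, lt_of_lt_of_le one_pos (le_max_right _ _), fun r hr => ?_⟩
  rcases le_or_gt r R' with h1 | h1
  · exact le_trans (hmax ⟨hr, h1⟩) (le_max_left _ _)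
  · exact le_trans (hR r (le_trans (le_max_left R 0) h1.le)) (le_max_right _ _)

lemma IIL.exists_rpow_exp_bound (p a : ℝ) (ha : 0 < a) :
    ∃ K, 0 < K ∧ ∀ r, 0 ≤ r → (1 + r) ^ p * Real.exp (-a * r) ≤ K := by
  apply IIL.bdd_of_tendsto
  · apply ContinuousOn.mul
    · exact (continuousOn_const.add continuousOn_id).rpow_const
        (fun x hx => Or.inl (by have h0 := mem_Ici.1 hx; show (1:ℝ) + x ≠ 0; positivity))
    · exact (continuous_exp.comp (continuous_const.mul continuous_id)).continuousOn
  · have h1 : Tendsto (fun r : ℝ => (1 + r) ^ p * Real.exp (-a * (1 + r)) * Real.exp a)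
        atTop (nhds (0 * Real.exp a)) := by
      refine Tendsto.mul_const _ ?_
      exact (tendsto_rpow_mul_exp_neg_mul_atTop_nhds_zero p a ha).comp
        (tendsto_atTop_add_const_left atTop 1 tendsto_id)
    rw [zero_mul] at h1
    refine h1.congr fun r => ?_
    rw [mul_assoc, ← Real.exp_add]
    ring_nf

lemma IIL.integrable_exp_norm (N : ℕ) (a : ℝ) (ha : 0 < a) :
    Integrable (fun x : EuclideanSpace ℝ (Fin N) => Real.exp (-a * ‖x‖)) := by
  obtain ⟨K, hK, hKb⟩ := IIL.exists_rpow_exp_bound ((N : ℝ) + 1) a ha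
  have h1 : Integrable (fun x : EuclideanSpace ℝ (Fin N) => K * (1 + ‖x‖) ^ (-((N : ℝ) + 1))) := by
    refine Integrable.const_mul ?_ K
    exact integrable_one_add_norm (by rw [finrank_euclideanSpace_fin]; linarith)
  refine h1.mono' ?_ ?_
  · exact (continuous_exp.comp (continuous_const.mul continuous_norm)).aestronglyMeasurable
  · filter_upwards with x
    have hx : (0 : ℝ) ≤ ‖x‖ := norm_nonneg x
    have h2 := hKb ‖x‖ hx
    have hp : (0 : ℝ) < (1 + ‖x‖) ^ ((N : ℝ) + 1) := rpow_pos_of_pos (by positivity) _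
    rw [Real.norm_eq_abs, abs_of_pos (exp_pos _)]
    rw [Real.rpow_neg (by positivity), mul_comm K, inv_mul_eq_div, le_div_iff₀ hp]
    linarith [h2]
set_option maxHeartbeats 1000000 in
theorem interaction_integral_limit
    (N : ℕ) (hN : 2 ≤ N)
    (W : ℝ → ℝ) (hW_cont : ContinuousOn W (Ici 0))
    (hW_pos : ∀ r ∈ Ici (0 : ℝ), 0 < W r)
    (A : ℝ) (hA : 0 < A)
    (hW_asym : Tendsto (fun r => r ^ (((N : ℝ) - 1) / 2) * Real.exp r * W r)
      atTop (nhds A))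
    (w : EuclideanSpace ℝ (Fin N) → ℝ) (hw : ∀ x, w x = W ‖x‖)
    (f : ℝ → ℝ) (hf_cont : Continuous f)
    (C₀ σ : ℝ) (hC₀ : 0 < C₀) (hσ : 0 < σ)
    (hf_bound : ∀ t : ℝ, |t| ≤ sSup (W '' Ici 0) → |f t| ≤ C₀ * |t| ^ (1 + σ)) :
    (∀ ρ : ℝ, 0 ≤ ρ → Integrable (fun x : EuclideanSpace ℝ (Fin N) =>
      f (w x) * w (x + ρ • EuclideanSpace.single (⟨0, by omega⟩ : Fin N) 1))) ∧
    Integrable (fun x : EuclideanSpace ℝ (Fin N) =>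
      f (w x) * Real.exp (-(x ⟨0, by omega⟩))) ∧
    Tendsto (fun ρ : ℝ =>
        (∫ x : EuclideanSpace ℝ (Fin N),
          f (w x) * w (x + ρ • EuclideanSpace.single (⟨0, by omega⟩ : Fin N) 1)) / W ρ)
      atTop
      (nhds (∫ x : EuclideanSpace ℝ (Fin N),
        f (w x) * Real.exp (-(x ⟨0, by omega⟩)))) := by
  have hN1 : (0 : ℕ) < N := by omega
  set i₀ : Fin N := ⟨0, hN1⟩ with hi₀
  set e₁ : EuclideanSpace ℝ (Fin N) := EuclideanSpace.single i₀ (1 : ℝ) with he₁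
  set q : ℝ := ((N : ℝ) - 1) / 2 with hqdef
  have hq : 0 ≤ q := by
    have : (2 : ℝ) ≤ (N : ℝ) := by exact_mod_cast hN
    rw [hqdef]; linarith
  set Φ : ℝ → ℝ := fun r => r ^ q * Real.exp r * W r with hΦdef
  -- eventual bounds on Φ
  obtain ⟨R₀, hR₀⟩ := eventually_atTop.1
    ((hW_asym.eventually_const_le (by linarith : A / 2 < A)).and
      (hW_asym.eventually_le_const (by linarith : A < 2 * A)))
  set R₁ : ℝ := max R₀ 1 with hR₁def
  have hR₁1 : (1 : ℝ) ≤ R₁ := le_max_right _ _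
  have hR₁0 : (0 : ℝ) ≤ R₁ := by linarith
  have hΦlb : ∀ r, R₁ ≤ r → A / 2 ≤ Φ r := fun r hr =>
    (hR₀ r (le_trans (le_max_left _ _) hr)).1
  have hΦub : ∀ r, R₁ ≤ r → Φ r ≤ 2 * A := fun r hr =>
    (hR₀ r (le_trans (le_max_left _ _) hr)).2
  -- sharp asymptotic bounds for W
  have hWub' : ∀ r, R₁ ≤ r → W r ≤ 2 * A * Real.exp (-r) / r ^ q := by
    intro r hr
    have hr0 : (0 : ℝ) < r := lt_of_lt_of_le one_pos (le_trans hR₁1 hr)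
    have hrq : (0 : ℝ) < r ^ q := rpow_pos_of_pos hr0 q
    have he : (0 : ℝ) < Real.exp r := exp_pos r
    have h : r ^ q * Real.exp r * W r ≤ 2 * A := hΦub r hr
    rw [le_div_iff₀ hrq, Real.exp_neg, mul_comm (2 * A) (Real.exp r)⁻¹, ← div_eq_inv_mul,
      le_div_iff₀ he]
    nlinarith [h]
  have hWlb' : ∀ r, R₁ ≤ r → A / 2 * Real.exp (-r) / r ^ q ≤ W r := by
    intro r hr
    have hr0 : (0 : ℝ) < r := lt_of_lt_of_le one_pos (le_trans hR₁1 hr)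
    have hrq : (0 : ℝ) < r ^ q := rpow_pos_of_pos hr0 q
    have he : (0 : ℝ) < Real.exp r := exp_pos r
    have h : A / 2 ≤ r ^ q * Real.exp r * W r := hΦlb r hr
    rw [div_le_iff₀ hrq, Real.exp_neg, ← div_eq_mul_inv, div_le_iff₀ he]
    nlinarith [h]
  -- compact part
  obtain ⟨rM, hrM, hMax⟩ := isCompact_Icc.exists_isMaxOn (nonempty_Icc.2 hR₁0)
    (hW_cont.mono (fun y hy => hy.1))
  obtain ⟨rm, hrm, hMin⟩ := isCompact_Icc.exists_isMinOn (nonempty_Icc.2 hR₁0)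
    (hW_cont.mono (fun y hy => hy.1))
  set B : ℝ := max (W rM * Real.exp R₁) (2 * A) with hBdef
  have hB : 0 < B := lt_of_lt_of_le (by linarith) (le_max_right _ _)
  have hone_le_rpow : ∀ u : ℝ, 1 ≤ u → 1 ≤ u ^ q := by
    intro u hu
    calc (1 : ℝ) = 1 ^ q := (one_rpow q).symm
      _ ≤ u ^ q := Real.rpow_le_rpow zero_le_one hu hq
  have hWub : ∀ r, 0 ≤ r → W r ≤ B * Real.exp (-r) := by
    intro r hr
    rcases le_total r R₁ with h | h
    · have h1 : W r ≤ W rM := hMax ⟨hr, h⟩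
      have e2 : Real.exp (-R₁) ≤ Real.exp (-r) := exp_le_exp.2 (by linarith)
      calc W r ≤ W rM := h1
        _ = W rM * Real.exp R₁ * Real.exp (-R₁) := by
            rw [mul_assoc, ← Real.exp_add]; simp
        _ ≤ W rM * Real.exp R₁ * Real.exp (-r) := by
            refine mul_le_mul_of_nonneg_left e2 ?_
            have := (hW_pos rM hrM.1).le
            positivity
        _ ≤ B * Real.exp (-r) :=
            mul_le_mul_of_nonneg_right (le_max_left _ _) (exp_pos _).le
    · calc W r ≤ 2 * A * Real.exp (-r) / r ^ q := hWub' r h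
        _ ≤ 2 * A * Real.exp (-r) :=
            div_le_self (by positivity) (hone_le_rpow r (le_trans hR₁1 h))
        _ ≤ B * Real.exp (-r) :=
            mul_le_mul_of_nonneg_right (le_max_right _ _) (exp_pos _).le
  set b : ℝ := min (W rm) (A / 2) with hbdef
  have hb : 0 < b := lt_min (hW_pos rm hrm.1) (by linarith)
  have hWlb : ∀ r, 0 ≤ r → b * Real.exp (-r) / (1 + r) ^ q ≤ W r := by
    intro r hr
    have h1r : (0 : ℝ) < (1 + r) ^ q := rpow_pos_of_pos (by linarith) q
    rcases le_total r R₁ with h | h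
    · have h1 : W rm ≤ W r := hMin ⟨hr, h⟩
      have h2 : b ≤ W rm := min_le_left _ _
      have he1 : Real.exp (-r) ≤ 1 := exp_le_one_iff.2 (by linarith)
      have h3 : Real.exp (-r) / (1 + r) ^ q ≤ 1 :=
        (div_le_one h1r).2 (le_trans he1 (hone_le_rpow _ (by linarith)))
      calc b * Real.exp (-r) / (1 + r) ^ q = b * (Real.exp (-r) / (1 + r) ^ q) := by ring
        _ ≤ b * 1 := mul_le_mul_of_nonneg_left h3 hb.le
        _ = b := mul_one b
        _ ≤ W rm := h2
        _ ≤ W r := h1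
    · have hr0 : (0 : ℝ) < r := lt_of_lt_of_le one_pos (le_trans hR₁1 h)
      refine le_trans ?_ (hWlb' r h)
      refine div_le_div₀ (by positivity) ?_ (rpow_pos_of_pos hr0 q) ?_
      · exact mul_le_mul_of_nonneg_right (min_le_right _ _) (exp_pos _).le
      · exact Real.rpow_le_rpow hr0.le (by linarith) hq
  have hWB : ∀ r, 0 ≤ r → W r ≤ B := by
    intro r hr
    refine le_trans (hWub r hr) ?_
    nlinarith [exp_le_one_iff.2 (by linarith : -r ≤ 0), (exp_pos (-r)).le]
  have hw_cont : Continuous w :=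
    (hW_cont.comp_continuous continuous_norm (fun y => norm_nonneg y)).congr
      (fun y => (hw y).symm)
  have hw_pos : ∀ y : EuclideanSpace ℝ (Fin N), 0 < w y := fun y => by rw [hw]; exact hW_pos _ (norm_nonneg y)
  have hsup : ∀ r, 0 ≤ r → W r ≤ sSup (W '' Ici 0) := by
    intro r hr
    refine le_csSup ⟨B, ?_⟩ (mem_image_of_mem _ hr)
    rintro y ⟨t, ht, rfl⟩
    exact hWB t ht
  have hfw : ∀ x : EuclideanSpace ℝ (Fin N), |f (w x)| ≤ C₀ * B ^ (1 + σ) * Real.exp (-(1 + σ) * ‖x‖) := by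
    intro x
    have h0 : (0 : ℝ) ≤ ‖x‖ := norm_nonneg x
    have hWx : 0 < W ‖x‖ := hW_pos _ h0
    have h1 : |w x| ≤ sSup (W '' Ici 0) := by
      rw [hw, abs_of_pos hWx]; exact hsup _ h0
    calc |f (w x)| ≤ C₀ * |w x| ^ (1 + σ) := hf_bound (w x) h1
      _ = C₀ * (W ‖x‖) ^ (1 + σ) := by rw [hw, abs_of_pos hWx]
      _ ≤ C₀ * (B * Real.exp (-‖x‖)) ^ (1 + σ) := by
          refine mul_le_mul_of_nonneg_left ?_ hC₀.le
          exact Real.rpow_le_rpow hWx.le (hWub _ h0) (by linarith)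
      _ = C₀ * B ^ (1 + σ) * Real.exp (-(1 + σ) * ‖x‖) := by
          rw [Real.mul_rpow hB.le (exp_pos _).le, ← Real.exp_mul, mul_assoc]
          congr 2
          ring
  -- Part 1
  have hcont1 : ∀ ρ : ℝ, Continuous fun x : EuclideanSpace ℝ (Fin N) => f (w x) * w (x + ρ • e₁) := fun ρ =>
    (hf_cont.comp hw_cont).mul (hw_cont.comp (continuous_id.add continuous_const))
  have hint1 : ∀ ρ : ℝ, 0 ≤ ρ → Integrable (fun x : EuclideanSpace ℝ (Fin N) => f (w x) * w (x + ρ • e₁)) := by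
    intro ρ hρ
    refine ((IIL.integrable_exp_norm N (1 + σ) (by linarith)).const_mul
      (C₀ * B ^ (1 + σ) * B)).mono' (hcont1 ρ).aestronglyMeasurable ?_
    filter_upwards with x
    rw [Real.norm_eq_abs, abs_mul]
    have h1 := hfw x
    have h2 : |w (x + ρ • e₁)| ≤ B := by
      rw [abs_of_pos (hw_pos _), hw]; exact hWB _ (norm_nonneg _)
    have h3 : (0 : ℝ) ≤ Real.exp (-(1 + σ) * ‖x‖) := (exp_pos _).le
    calc |f (w x)| * |w (x + ρ • e₁)|
        ≤ (C₀ * B ^ (1 + σ) * Real.exp (-(1 + σ) * ‖x‖)) * B := by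
          exact mul_le_mul h1 h2 (abs_nonneg _) (by positivity)
      _ = C₀ * B ^ (1 + σ) * B * Real.exp (-(1 + σ) * ‖x‖) := by ring
  -- coordinate bound
  have hx1 : ∀ x : EuclideanSpace ℝ (Fin N), |x i₀| ≤ ‖x‖ := by
    intro x
    have h := abs_real_inner_le_norm x e₁
    rw [he₁] at h
    rw [EuclideanSpace.inner_single_right, EuclideanSpace.norm_single] at h
    simpa using h
  -- Part 2
  have hcoord_cont : Continuous fun x : EuclideanSpace ℝ (Fin N) => x i₀ := by
    exact continuous_apply i₀ |>.comp (PiLp.continuous_ofLp 2 fun _ : Fin N => ℝ)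
  have hint2 : Integrable (fun x : EuclideanSpace ℝ (Fin N) => f (w x) * Real.exp (-(x i₀))) := by
    refine ((IIL.integrable_exp_norm N σ hσ).const_mul
      (C₀ * B ^ (1 + σ))).mono'
      (((hf_cont.comp hw_cont).mul (continuous_exp.comp hcoord_cont.neg)).aestronglyMeasurable) ?_
    filter_upwards with x
    rw [Real.norm_eq_abs, abs_mul, abs_of_pos (exp_pos _)]
    have h1 := hfw x
    have h2 : Real.exp (-(x i₀)) ≤ Real.exp ‖x‖ :=
      exp_le_exp.2 (le_trans (neg_le_abs _) (hx1 x))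
    calc |f (w x)| * Real.exp (-(x i₀))
        ≤ (C₀ * B ^ (1 + σ) * Real.exp (-(1 + σ) * ‖x‖)) * Real.exp ‖x‖ :=
          mul_le_mul h1 h2 (exp_pos _).le (by positivity)
      _ = C₀ * B ^ (1 + σ) * Real.exp (-σ * ‖x‖) := by
          rw [mul_assoc, ← Real.exp_add]; ring_nf
  refine ⟨hint1, hint2, ?_⟩
  -- Part 3
  -- ratio bound
  set K : ℝ := max (4 * 2 ^ q) (B / b) with hKdef
  have hK : 0 < K := lt_of_lt_of_le (by positivity : (0:ℝ) < 4 * 2 ^ q) (le_max_left _ _)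
  have hρe : ∀ ρ : ℝ, 0 ≤ ρ → ‖ρ • e₁‖ = ρ := by
    intro ρ hρ
    rw [he₁, norm_smul, EuclideanSpace.norm_single, norm_one, mul_one, Real.norm_eq_abs,
      abs_of_nonneg hρ]
  have hsge : ∀ (ρ : ℝ) (x : EuclideanSpace ℝ (Fin N)), 0 ≤ ρ → ρ - ‖x‖ ≤ ‖x + ρ • e₁‖ := by
    intro ρ x hρ
    have h := norm_sub_le (x + ρ • e₁) x
    simp only [add_sub_cancel_left] at h
    rw [hρe ρ hρ] at h
    linarith
  have hratio : ∀ ρ : ℝ, 2 * R₁ ≤ ρ → ∀ x : EuclideanSpace ℝ (Fin N),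
      W ‖x + ρ • e₁‖ / W ρ ≤ K * (Real.exp ‖x‖ * (1 + 2 * ‖x‖) ^ q) := by
    intro ρ hρ x
    set s := ‖x + ρ • e₁‖ with hsdef
    have hs0 : 0 ≤ s := norm_nonneg _
    have hρR : R₁ ≤ ρ := by linarith
    have hρ0 : 0 < ρ := lt_of_lt_of_le one_pos (le_trans hR₁1 hρR)
    have hxs : ρ - ‖x‖ ≤ s := hsge ρ x hρ0.le
    have hx0 : (0:ℝ) ≤ ‖x‖ := norm_nonneg x
    have h2x : (1:ℝ) ≤ (1 + 2*‖x‖) ^ q := hone_le_rpow _ (by linarith)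
    have hWρ : 0 < W ρ := hW_pos ρ hρ0.le
    rcases le_or_gt ‖x‖ (ρ/2) with h2 | h2
    · have hsR : R₁ ≤ s := by linarith
      have hs1 : (0:ℝ) < s := lt_of_lt_of_le (lt_of_lt_of_le one_pos hR₁1) hsR
      have h4 : W s / W ρ ≤ (2*A*Real.exp (-s)/s^q) / (A/2*Real.exp (-ρ)/ρ^q) :=
        div_le_div₀ (by positivity) (hWub' s hsR) (by positivity) (hWlb' ρ hρR)
      have h5 : (2*A*Real.exp (-s)/s^q) / (A/2*Real.exp (-ρ)/ρ^q)
          = 4 * Real.exp (ρ - s) * (ρ^q / s^q) := by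
        rw [Real.exp_sub, Real.exp_neg, Real.exp_neg]
        have e1 : Real.exp s ≠ 0 := (exp_pos s).ne'
        have e2 : Real.exp ρ ≠ 0 := (exp_pos ρ).ne'
        have e3 : s ^ q ≠ 0 := (rpow_pos_of_pos hs1 q).ne'
        have e4 : ρ ^ q ≠ 0 := (rpow_pos_of_pos hρ0 q).ne'
        have e5 : A ≠ 0 := hA.ne'
        field_simp
        ring
      have h6 : ρ ^ q / s ^ q ≤ 2 ^ q := by
        rw [← Real.div_rpow hρ0.le hs0]
        refine Real.rpow_le_rpow (by positivity) ?_ hq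
        rw [div_le_iff₀ hs1]; linarith
      have h7 : Real.exp (ρ - s) ≤ Real.exp ‖x‖ := exp_le_exp.2 (by linarith)
      calc W s / W ρ ≤ 4 * Real.exp (ρ - s) * (ρ^q / s^q) := by rw [← h5]; exact h4
        _ ≤ 4 * Real.exp ‖x‖ * 2 ^ q := by
            refine mul_le_mul (mul_le_mul_of_nonneg_left h7 (by norm_num)) h6 ?_ (by positivity)
            positivity
        _ = (4 * 2 ^ q) * (Real.exp ‖x‖ * 1) := by ring
        _ ≤ K * (Real.exp ‖x‖ * (1 + 2*‖x‖) ^ q) := by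
            refine mul_le_mul (le_max_left _ _) ?_ (by positivity) hK.le
            exact mul_le_mul_of_nonneg_left h2x (exp_pos _).le
    · have h4 : W s / W ρ ≤ (B*Real.exp (-s)) / (b*Real.exp (-ρ)/(1+ρ)^q) :=
        div_le_div₀ (by positivity) (hWub s hs0) (by positivity) (hWlb ρ hρ0.le)
      have h5 : (B*Real.exp (-s)) / (b*Real.exp (-ρ)/(1+ρ)^q)
          = (B/b) * Real.exp (ρ - s) * (1+ρ)^q := by
        rw [Real.exp_sub, Real.exp_neg, Real.exp_neg]
        have e1 : Real.exp s ≠ 0 := (exp_pos s).ne'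
        have e2 : Real.exp ρ ≠ 0 := (exp_pos ρ).ne'
        have e5 : (1+ρ) ^ q ≠ 0 := (rpow_pos_of_pos (by linarith) q).ne'
        have e6 : b ≠ 0 := hb.ne'
        field_simp
      have h6 : (1+ρ)^q ≤ (1+2*‖x‖)^q := Real.rpow_le_rpow (by linarith) (by linarith) hq
      have h7 : Real.exp (ρ - s) ≤ Real.exp ‖x‖ := exp_le_exp.2 (by linarith)
      calc W s / W ρ ≤ (B/b) * Real.exp (ρ - s) * (1+ρ)^q := by rw [← h5]; exact h4
        _ ≤ (B/b) * Real.exp ‖x‖ * (1+2*‖x‖)^q := by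
            refine mul_le_mul (mul_le_mul_of_nonneg_left h7 (by positivity)) h6 ?_ (by positivity)
            positivity
        _ = (B/b) * (Real.exp ‖x‖ * (1+2*‖x‖)^q) := by ring
        _ ≤ K * (Real.exp ‖x‖ * (1+2*‖x‖)^q) :=
            mul_le_mul_of_nonneg_right (le_max_right _ _) (by positivity)
  obtain ⟨K₂, hK₂, hK₂b⟩ := IIL.exists_rpow_exp_bound q (σ/2) (by linarith)
  set D : ℝ := C₀ * B ^ (1+σ) * (K * (2^q * K₂)) with hDdef
  have hbound_key : ∀ ρ : ℝ, 2*R₁ ≤ ρ → ∀ x : EuclideanSpace ℝ (Fin N),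
      ‖f (w x) * w (x + ρ • e₁) / W ρ‖ ≤ D * Real.exp (-(σ/2) * ‖x‖) := by
    intro ρ hρ x
    have hρ0 : 0 < ρ := by linarith [lt_of_lt_of_le one_pos hR₁1]
    have hWρ : 0 < W ρ := hW_pos ρ hρ0.le
    have hr0 : (0:ℝ) ≤ ‖x‖ := norm_nonneg x
    rw [Real.norm_eq_abs, abs_div, abs_mul, abs_of_pos hWρ, abs_of_pos (hw_pos _)]
    have core : Real.exp (-(1+σ)*‖x‖) * (Real.exp ‖x‖ * (1+2*‖x‖)^q)
        ≤ (2^q * K₂) * Real.exp (-(σ/2)*‖x‖) := by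
      have e0 : Real.exp (-(1+σ)*‖x‖) * Real.exp ‖x‖
          = Real.exp (-(σ/2)*‖x‖) * Real.exp (-(σ/2)*‖x‖) := by
        rw [← Real.exp_add, ← Real.exp_add]; congr 1; ring
      have c1 : (1+2*‖x‖)^q ≤ 2^q * (1+‖x‖)^q := by
        rw [← Real.mul_rpow (by norm_num) (by linarith)]
        exact Real.rpow_le_rpow (by linarith) (by linarith) hq
      have c2 : (1+‖x‖)^q * Real.exp (-(σ/2)*‖x‖) ≤ K₂ := hK₂b ‖x‖ hr0
      calc Real.exp (-(1+σ)*‖x‖) * (Real.exp ‖x‖ * (1+2*‖x‖)^q)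
          = (Real.exp (-(1+σ)*‖x‖) * Real.exp ‖x‖) * (1+2*‖x‖)^q := by ring
        _ = Real.exp (-(σ/2)*‖x‖) * Real.exp (-(σ/2)*‖x‖) * (1+2*‖x‖)^q := by rw [e0]
        _ ≤ Real.exp (-(σ/2)*‖x‖) * Real.exp (-(σ/2)*‖x‖) * (2^q * (1+‖x‖)^q) :=
            mul_le_mul_of_nonneg_left c1 (by positivity)
        _ = 2^q * ((1+‖x‖)^q * Real.exp (-(σ/2)*‖x‖)) * Real.exp (-(σ/2)*‖x‖) := by ring
        _ ≤ 2^q * K₂ * Real.exp (-(σ/2)*‖x‖) := by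
            refine mul_le_mul_of_nonneg_right ?_ (exp_pos _).le
            exact mul_le_mul_of_nonneg_left c2 (by positivity)
    calc |f (w x)| * w (x + ρ • e₁) / W ρ
        = |f (w x)| * (W ‖x + ρ • e₁‖ / W ρ) := by rw [hw (x + ρ • e₁)]; ring
      _ ≤ (C₀ * B^(1+σ) * Real.exp (-(1+σ)*‖x‖)) * (K * (Real.exp ‖x‖ * (1+2*‖x‖)^q)) := by
          refine mul_le_mul (hfw x) (hratio ρ hρ x) ?_ (by positivity)
          exact div_nonneg (hW_pos _ (norm_nonneg _)).le hWρ.le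
      _ = (C₀ * B^(1+σ) * K) * (Real.exp (-(1+σ)*‖x‖) * (Real.exp ‖x‖ * (1+2*‖x‖)^q)) := by
          ring
      _ ≤ (C₀ * B^(1+σ) * K) * ((2^q * K₂) * Real.exp (-(σ/2)*‖x‖)) :=
          mul_le_mul_of_nonneg_left core (by positivity)
      _ = D * Real.exp (-(σ/2)*‖x‖) := by rw [hDdef]; ring
  -- pointwise limit
  have hlim : ∀ x : EuclideanSpace ℝ (Fin N),
      Tendsto (fun ρ : ℝ => f (w x) * w (x + ρ • e₁) / W ρ) atTop
        (nhds (f (w x) * Real.exp (-(x i₀)))) := by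
    intro x
    set x₁ : ℝ := x i₀ with hx₁def
    set s : ℝ → ℝ := fun ρ => ‖x + ρ • e₁‖ with hsdef
    have hs0 : ∀ ρ, 0 ≤ s ρ := fun ρ => norm_nonneg _
    have hinner : (inner ℝ x e₁ : ℝ) = x₁ := by
      rw [he₁, EuclideanSpace.inner_single_right]
      simp [hx₁def]
    have hs_sq : ∀ ρ : ℝ, s ρ ^ 2 = ‖x‖^2 + 2*ρ*x₁ + ρ^2 := by
      intro ρ
      have h := norm_add_sq_real x (ρ • e₁)
      rw [real_inner_smul_right, hinner] at h
      have h2 : ‖ρ • e₁‖^2 = ρ^2 := by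
        rw [norm_smul, he₁, EuclideanSpace.norm_single, norm_one, mul_one, Real.norm_eq_abs,
          sq_abs]
      rw [h2] at h
      rw [hsdef]
      simpa [mul_assoc] using h
    have hs_ge : ∀ ρ : ℝ, 0 ≤ ρ → ρ - ‖x‖ ≤ s ρ := fun ρ hρ => hsge ρ x hρ
    have hs_le : ∀ ρ : ℝ, 0 ≤ ρ → s ρ ≤ ρ + ‖x‖ := by
      intro ρ hρ
      have h := norm_add_le x (ρ • e₁)
      rw [hρe ρ hρ] at h
      rw [hsdef]; linarith [h]
    have hs_top : Tendsto s atTop atTop := by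
      have hlin : Tendsto (fun ρ : ℝ => ρ - ‖x‖) atTop atTop := by
        have h0 := tendsto_atTop_add_const_right atTop (-‖x‖) (tendsto_id (α := ℝ))
        simpa [sub_eq_add_neg] using h0
      refine tendsto_atTop_mono' atTop ?_ hlin
      filter_upwards [eventually_ge_atTop (0:ℝ)] with ρ hρ
      exact hs_ge ρ hρ
    have hsdivρ : Tendsto (fun ρ => s ρ / ρ) atTop (nhds 1) := by
      have hlow : Tendsto (fun ρ : ℝ => (ρ - ‖x‖)/ρ) atTop (nhds 1) := by
        have h1 : Tendsto (fun ρ : ℝ => 1 - ‖x‖/ρ) atTop (nhds (1 - 0)) :=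
          tendsto_const_nhds.sub (tendsto_const_nhds.div_atTop tendsto_id)
        rw [sub_zero] at h1
        refine h1.congr' ?_
        filter_upwards [eventually_ge_atTop (1:ℝ)] with ρ hρ
        have : ρ ≠ 0 := by linarith
        field_simp
      have hhigh : Tendsto (fun ρ : ℝ => (ρ + ‖x‖)/ρ) atTop (nhds 1) := by
        have h1 : Tendsto (fun ρ : ℝ => 1 + ‖x‖/ρ) atTop (nhds (1 + 0)) :=
          tendsto_const_nhds.add (tendsto_const_nhds.div_atTop tendsto_id)
        rw [add_zero] at h1
        refine h1.congr' ?_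
        filter_upwards [eventually_ge_atTop (1:ℝ)] with ρ hρ
        have : ρ ≠ 0 := by linarith
        field_simp
      refine tendsto_of_tendsto_of_tendsto_of_le_of_le' hlow hhigh ?_ ?_
      · filter_upwards [eventually_ge_atTop (1:ℝ)] with ρ hρ
        have hρ0 : (0:ℝ) < ρ := by linarith
        exact (div_le_div_iff_of_pos_right hρ0).2 (hs_ge ρ hρ0.le)
      · filter_upwards [eventually_ge_atTop (1:ℝ)] with ρ hρ
        have hρ0 : (0:ℝ) < ρ := by linarith
        exact (div_le_div_iff_of_pos_right hρ0).2 (hs_le ρ hρ0.le)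
    have hdiff : Tendsto (fun ρ => s ρ - ρ) atTop (nhds x₁) := by
      have hnum : Tendsto (fun ρ : ℝ => ‖x‖^2/ρ + 2*x₁) atTop (nhds (0 + 2*x₁)) :=
        (tendsto_const_nhds.div_atTop tendsto_id).add tendsto_const_nhds
      have hden : Tendsto (fun ρ => s ρ/ρ + 1) atTop (nhds (1+1)) :=
        hsdivρ.add tendsto_const_nhds
      have hq2 := hnum.div hden (by norm_num)
      have hval : (0 + 2*x₁)/(1+1) = x₁ := by ring
      rw [hval] at hq2
      refine hq2.congr' ?_
      filter_upwards [eventually_ge_atTop (1:ℝ)] with ρ hρ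
      have hρ0 : (0:ℝ) < ρ := by linarith
      have hsum : 0 < s ρ + ρ := by linarith [hs0 ρ]
      have hkey : (s ρ - ρ) * (s ρ + ρ) = ‖x‖^2 + 2*ρ*x₁ := by
        linear_combination hs_sq ρ
      have hsρ0 : 0 ≤ s ρ / ρ := div_nonneg (hs0 ρ) hρ0.le
      have hden0 : s ρ/ρ + 1 ≠ 0 := by linarith
      show (‖x‖^2/ρ + 2*x₁)/(s ρ/ρ + 1) = s ρ - ρ
      rw [div_eq_iff hden0]
      field_simp
      linear_combination (-1 : ℝ) * hs_sq ρ
    have hρdivs : Tendsto (fun ρ => ρ / s ρ) atTop (nhds 1) := by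
      have h1 := hsdivρ.inv₀ one_ne_zero
      rw [inv_one] at h1
      exact h1.congr (fun ρ => inv_div (s ρ) ρ)
    have hexp : Tendsto (fun ρ => Real.exp (ρ - s ρ)) atTop (nhds (Real.exp (-x₁))) := by
      have h1 : Tendsto (fun ρ => ρ - s ρ) atTop (nhds (-x₁)) :=
        hdiff.neg.congr (fun ρ => by ring)
      exact (Real.continuous_exp.tendsto (-x₁)).comp h1
    have hpow : Tendsto (fun ρ => (ρ / s ρ) ^ q) atTop (nhds 1) := by
      have h1 := hρdivs.rpow_const (Or.inr hq)
      rwa [Real.one_rpow] at h1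
    have hΦs : Tendsto (fun ρ => Φ (s ρ)) atTop (nhds A) := hW_asym.comp hs_top
    have hratio_lim : Tendsto (fun ρ => W (s ρ) / W ρ) atTop (nhds (Real.exp (-x₁))) := by
      have hmain := ((hΦs.div hW_asym hA.ne').mul hexp).mul hpow
      rw [div_self hA.ne', one_mul, mul_one] at hmain
      refine hmain.congr' ?_
      filter_upwards [eventually_ge_atTop (max R₁ (‖x‖ + 1))] with ρ hρ
      have hρR : R₁ ≤ ρ := le_trans (le_max_left _ _) hρ
      have hρ0 : 0 < ρ := lt_of_lt_of_le one_pos (le_trans hR₁1 hρR)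
      have hxρ : ‖x‖ + 1 ≤ ρ := le_trans (le_max_right _ _) hρ
      have hsρ : 0 < s ρ := lt_of_lt_of_le (by linarith : (0:ℝ) < ρ - ‖x‖) (hs_ge ρ hρ0.le)
      have e1 : Real.exp (s ρ) ≠ 0 := (exp_pos _).ne'
      have e2 : Real.exp ρ ≠ 0 := (exp_pos _).ne'
      have e3 : (s ρ) ^ q ≠ 0 := (rpow_pos_of_pos hsρ q).ne'
      have e4 : ρ ^ q ≠ 0 := (rpow_pos_of_pos hρ0 q).ne'
      have e5 : W ρ ≠ 0 := (hW_pos ρ hρ0.le).ne'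
      have e6 : W (s ρ) ≠ 0 := (hW_pos _ (hs0 ρ)).ne'
      show (s ρ ^ q * Real.exp (s ρ) * W (s ρ)) / (ρ ^ q * Real.exp ρ * W ρ)
          * Real.exp (ρ - s ρ) * (ρ / s ρ) ^ q = W (s ρ) / W ρ
      rw [Real.exp_sub, Real.div_rpow hρ0.le hsρ.le]
      field_simp
    have hgoal := hratio_lim.const_mul (f (w x))
    refine hgoal.congr (fun ρ => ?_)
    rw [hw (x + ρ • e₁), mul_div_assoc]
  -- dominated convergence
  have hmeas : ∀ᶠ ρ : ℝ in atTop, AEStronglyMeasurable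
      (fun x : EuclideanSpace ℝ (Fin N) => f (w x) * w (x + ρ • e₁) / W ρ) volume :=
    Eventually.of_forall (fun ρ => ((hcont1 ρ).div_const (W ρ)).aestronglyMeasurable)
  have hbound : ∀ᶠ ρ : ℝ in atTop, ∀ᵐ x : EuclideanSpace ℝ (Fin N),
      ‖f (w x) * w (x + ρ • e₁) / W ρ‖ ≤ D * Real.exp (-(σ/2) * ‖x‖) := by
    filter_upwards [eventually_ge_atTop (2*R₁)] with ρ hρ
    exact ae_of_all _ (fun x => hbound_key ρ hρ x)
  have hint : Integrable (fun x : EuclideanSpace ℝ (Fin N) => D * Real.exp (-(σ/2) * ‖x‖)) :=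
    (IIL.integrable_exp_norm N (σ/2) (by linarith)).const_mul D
  have hDCT := MeasureTheory.tendsto_integral_filter_of_dominated_convergence
    (μ := volume) (F := fun (ρ : ℝ) (x : EuclideanSpace ℝ (Fin N)) =>
      f (w x) * w (x + ρ • e₁) / W ρ)
    (f := fun x : EuclideanSpace ℝ (Fin N) => f (w x) * Real.exp (-(x i₀)))
    (bound := fun x : EuclideanSpace ℝ (Fin N) => D * Real.exp (-(σ/2) * ‖x‖))
    hmeas hbound hint (ae_of_all _ hlim)
  refine Tendsto.congr (fun ρ => ?_) hDCT
  exact integral_div (W ρ) _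
end

section
/- The following hold: (1) for every i = 2, …, 6, r_i = min_{j<i} |P_i − P_j| = min{|P_i − P_j| : j < i, τ_j = −τ_i}; (2) |P_i − P_j| ≥ √2·min_{2≤s≤6} r_s whenever i ≠ j and τ_i·τ_j = 1. -/
open Finset

private lemma aux_le_sqrt (m x y : ℝ) (hm : 0 ≤ m) (h : m ^ 2 ≤ x ^ 2 + y ^ 2) :
    m ≤ Real.sqrt (x ^ 2 + y ^ 2) := by
  calc m = Real.sqrt (m ^ 2) := (Real.sqrt_sq hm).symm
    _ ≤ _ := Real.sqrt_le_sqrt h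

private lemma aux_eq_sqrt (c : ℝ) (hc : 0 ≤ c) : c = Real.sqrt (c ^ 2 + 0 ^ 2) := by
  rw [show c ^ 2 + 0 ^ 2 = c ^ 2 by ring, Real.sqrt_sq hc]

private lemma aux_sqrt2 (m x y : ℝ) (hm : 0 ≤ m) (h : 2 * m ^ 2 ≤ x ^ 2 + y ^ 2) :
    Real.sqrt 2 * m ≤ Real.sqrt (x ^ 2 + y ^ 2) := by
  have : Real.sqrt 2 * m = Real.sqrt (2 * m ^ 2) := by
    rw [Real.sqrt_mul (by norm_num), Real.sqrt_sq hm]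
  rw [this]
  exact Real.sqrt_le_sqrt h

set_option maxHeartbeats 2000000 in
theorem cross_configuration_properties
    (N : ℕ) (hN : 2 ≤ N)
    (v u : EuclideanSpace ℝ (Fin N))
    (hv : ‖v‖ = 1) (hu : ‖u‖ = 1) (hvu : (inner ℝ v u : ℝ) = 0)
    (a : EuclideanSpace ℝ (Fin N))
    (r : ℕ → ℝ) (hr : ∀ m, 2 ≤ m → m ≤ 6 → 0 < r m)
    (P : ℕ → EuclideanSpace ℝ (Fin N))
    (hP1 : P 1 = a)
    (hP2 : P 2 = a + r 2 • v)
    (hP3 : P 3 = a + (r 2 + r 3) • v)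
    (hP4 : P 4 = a + (r 2 + r 3 + r 4) • v)
    (hP5 : P 5 = a + r 5 • u)
    (hP6 : P 6 = a - r 6 • u)
    (τ : ℕ → ℝ)
    (hτ1 : τ 1 = -1) (hτ3 : τ 3 = -1)
    (hτ2 : τ 2 = 1) (hτ4 : τ 4 = 1) (hτ5 : τ 5 = 1) (hτ6 : τ 6 = 1) :
    -- (1) r i is the minimum distance to previous points, attained at an
    -- opposite-sign point
    (∀ i, 2 ≤ i → i ≤ 6 →
      (∀ j, 1 ≤ j → j < i → r i ≤ ‖P i - P j‖) ∧
      (∃ j, 1 ≤ j ∧ j < i ∧ τ j = -τ i ∧ r i = ‖P i - P j‖)) ∧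
    -- (2) same-sign points are at distance at least √2 times the minimal gap
    (∀ i j, 1 ≤ i → i ≤ 6 → 1 ≤ j → j ≤ 6 → i ≠ j → τ i * τ j = 1 →
      ∃ s, 2 ≤ s ∧ s ≤ 6 ∧ Real.sqrt 2 * r s ≤ ‖P i - P j‖) := by
  have h2 := hr 2 (by norm_num) (by norm_num)
  have h3 := hr 3 (by norm_num) (by norm_num)
  have h4 := hr 4 (by norm_num) (by norm_num)
  have h5 := hr 5 (by norm_num) (by norm_num)
  have h6 := hr 6 (by norm_num) (by norm_num)
  have nrm : ∀ c d : ℝ, ‖(c • v + d • u : EuclideanSpace ℝ (Fin N))‖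
      = Real.sqrt (c ^ 2 + d ^ 2) := by
    intro c d
    rw [← Real.sqrt_sq (norm_nonneg _)]
    congr 1
    rw [← real_inner_self_eq_norm_sq, real_inner_add_add_self,
      real_inner_smul_left, real_inner_smul_left, real_inner_smul_left,
      real_inner_smul_right, real_inner_smul_right, real_inner_smul_right,
      hvu, real_inner_self_eq_norm_sq, real_inner_self_eq_norm_sq, hv, hu]
    ring
  have de : ∀ (i j : ℕ) (c d : ℝ), P i - P j = c • v + d • u →
      ‖P i - P j‖ = Real.sqrt (c ^ 2 + d ^ 2) := by
    intro i j c d h; rw [h, nrm]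
  -- differences
  have e21 : P 2 - P 1 = (r 2) • v + (0:ℝ) • u := by rw [hP1, hP2]; module
  have e31 : P 3 - P 1 = (r 2 + r 3) • v + (0:ℝ) • u := by rw [hP1, hP3]; module
  have e32 : P 3 - P 2 = (r 3) • v + (0:ℝ) • u := by rw [hP2, hP3]; module
  have e41 : P 4 - P 1 = (r 2 + r 3 + r 4) • v + (0:ℝ) • u := by rw [hP1, hP4]; module
  have e42 : P 4 - P 2 = (r 3 + r 4) • v + (0:ℝ) • u := by rw [hP2, hP4]; module
  have e43 : P 4 - P 3 = (r 4) • v + (0:ℝ) • u := by rw [hP3, hP4]; module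
  have e51 : P 5 - P 1 = (0:ℝ) • v + (r 5) • u := by rw [hP1, hP5]; module
  have e52 : P 5 - P 2 = (-(r 2)) • v + (r 5) • u := by rw [hP2, hP5]; module
  have e53 : P 5 - P 3 = (-(r 2 + r 3)) • v + (r 5) • u := by rw [hP3, hP5]; module
  have e54 : P 5 - P 4 = (-(r 2 + r 3 + r 4)) • v + (r 5) • u := by rw [hP4, hP5]; module
  have e61 : P 6 - P 1 = (0:ℝ) • v + (-(r 6)) • u := by rw [hP1, hP6]; module
  have e62 : P 6 - P 2 = (-(r 2)) • v + (-(r 6)) • u := by rw [hP2, hP6]; module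
  have e63 : P 6 - P 3 = (-(r 2 + r 3)) • v + (-(r 6)) • u := by rw [hP3, hP6]; module
  have e64 : P 6 - P 4 = (-(r 2 + r 3 + r 4)) • v + (-(r 6)) • u := by rw [hP4, hP6]; module
  have e65 : P 6 - P 5 = (0:ℝ) • v + (-(r 5 + r 6)) • u := by rw [hP5, hP6]; module
  have nsym : ∀ i j : ℕ, ‖P i - P j‖ = ‖P j - P i‖ := fun i j => norm_sub_rev _ _
  constructor
  · intro i hi2 hi6
    interval_cases i
    · refine ⟨?_, 1, by norm_num, by norm_num, by rw [hτ1, hτ2], ?_⟩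
      · intro j hj1 hj2; interval_cases j
        rw [de 2 1 _ _ e21]; exact aux_le_sqrt _ _ _ h2.le (by clear * - h2 h3 h4 h5 h6; nlinarith)
      · rw [de 2 1 _ _ e21]; exact aux_eq_sqrt _ h2.le
    · refine ⟨?_, 2, by norm_num, by norm_num, by rw [hτ2, hτ3]; norm_num, ?_⟩
      · intro j hj1 hj2; interval_cases j
        · rw [de 3 1 _ _ e31]; exact aux_le_sqrt _ _ _ h3.le (by clear * - h2 h3 h4 h5 h6; nlinarith)
        · rw [de 3 2 _ _ e32]; exact aux_le_sqrt _ _ _ h3.le (by clear * - h2 h3 h4 h5 h6; nlinarith)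
      · rw [de 3 2 _ _ e32]; exact aux_eq_sqrt _ h3.le
    · refine ⟨?_, 3, by norm_num, by norm_num, by rw [hτ3, hτ4], ?_⟩
      · intro j hj1 hj2; interval_cases j
        · rw [de 4 1 _ _ e41]; exact aux_le_sqrt _ _ _ h4.le (by clear * - h2 h3 h4 h5 h6; nlinarith)
        · rw [de 4 2 _ _ e42]; exact aux_le_sqrt _ _ _ h4.le (by clear * - h2 h3 h4 h5 h6; nlinarith)
        · rw [de 4 3 _ _ e43]; exact aux_le_sqrt _ _ _ h4.le (by clear * - h2 h3 h4 h5 h6; nlinarith)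
      · rw [de 4 3 _ _ e43]; exact aux_eq_sqrt _ h4.le
    · refine ⟨?_, 1, by norm_num, by norm_num, by rw [hτ1, hτ5], ?_⟩
      · intro j hj1 hj2; interval_cases j
        · rw [de 5 1 _ _ e51]; exact aux_le_sqrt _ _ _ h5.le (by clear * - h2 h3 h4 h5 h6; nlinarith)
        · rw [de 5 2 _ _ e52]; exact aux_le_sqrt _ _ _ h5.le (by clear * - h2 h3 h4 h5 h6; nlinarith)
        · rw [de 5 3 _ _ e53]; exact aux_le_sqrt _ _ _ h5.le (by clear * - h2 h3 h4 h5 h6; nlinarith)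
        · rw [de 5 4 _ _ e54]; exact aux_le_sqrt _ _ _ h5.le (by clear * - h2 h3 h4 h5 h6; nlinarith)
      · rw [de 5 1 _ _ e51]
        rw [show (0:ℝ) ^ 2 + r 5 ^ 2 = r 5 ^ 2 + 0 ^ 2 by ring]
        exact aux_eq_sqrt _ h5.le
    · refine ⟨?_, 1, by norm_num, by norm_num, by rw [hτ1, hτ6], ?_⟩
      · intro j hj1 hj2; interval_cases j
        · rw [de 6 1 _ _ e61]; exact aux_le_sqrt _ _ _ h6.le (by clear * - h2 h3 h4 h5 h6; nlinarith)
        · rw [de 6 2 _ _ e62]; exact aux_le_sqrt _ _ _ h6.le (by clear * - h2 h3 h4 h5 h6; nlinarith)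
        · rw [de 6 3 _ _ e63]; exact aux_le_sqrt _ _ _ h6.le (by clear * - h2 h3 h4 h5 h6; nlinarith)
        · rw [de 6 4 _ _ e64]; exact aux_le_sqrt _ _ _ h6.le (by clear * - h2 h3 h4 h5 h6; nlinarith)
        · rw [de 6 5 _ _ e65]; exact aux_le_sqrt _ _ _ h6.le (by clear * - h2 h3 h4 h5 h6; nlinarith)
      · rw [de 6 1 _ _ e61]
        rw [show (0:ℝ) ^ 2 + (-(r 6)) ^ 2 = r 6 ^ 2 + 0 ^ 2 by ring]
        exact aux_eq_sqrt _ h6.le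
  · intro i j hi1 hi6 hj1 hj6 hij hsign
    interval_cases i <;> interval_cases j <;>
      simp only [hτ1, hτ2, hτ3, hτ4, hτ5, hτ6] at hsign <;>
      first
      | exact absurd rfl hij
      | norm_num at hsign
      | skip
    -- remaining: same-sign pairs
    · -- (1,3)
      rw [nsym, de 3 1 _ _ e31]
      rcases le_total (r 2) (r 3) with h | h
      · exact ⟨2, by norm_num, by norm_num, aux_sqrt2 _ _ _ h2.le (by clear * - h2 h3 h4 h5 h6 h; nlinarith)⟩
      · exact ⟨3, by norm_num, by norm_num, aux_sqrt2 _ _ _ h3.le (by clear * - h2 h3 h4 h5 h6 h; nlinarith)⟩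
    · -- (2,4)
      rw [nsym, de 4 2 _ _ e42]
      rcases le_total (r 3) (r 4) with h | h
      · exact ⟨3, by norm_num, by norm_num, aux_sqrt2 _ _ _ h3.le (by clear * - h2 h3 h4 h5 h6 h; nlinarith)⟩
      · exact ⟨4, by norm_num, by norm_num, aux_sqrt2 _ _ _ h4.le (by clear * - h2 h3 h4 h5 h6 h; nlinarith)⟩
    · -- (2,5)
      rw [nsym, de 5 2 _ _ e52]
      rcases le_total (r 2) (r 5) with h | h
      · exact ⟨2, by norm_num, by norm_num, aux_sqrt2 _ _ _ h2.le (by clear * - h2 h3 h4 h5 h6 h; nlinarith)⟩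
      · exact ⟨5, by norm_num, by norm_num, aux_sqrt2 _ _ _ h5.le (by clear * - h2 h3 h4 h5 h6 h; nlinarith)⟩
    · -- (2,6)
      rw [nsym, de 6 2 _ _ e62]
      rcases le_total (r 2) (r 6) with h | h
      · exact ⟨2, by norm_num, by norm_num, aux_sqrt2 _ _ _ h2.le (by clear * - h2 h3 h4 h5 h6 h; nlinarith)⟩
      · exact ⟨6, by norm_num, by norm_num, aux_sqrt2 _ _ _ h6.le (by clear * - h2 h3 h4 h5 h6 h; nlinarith)⟩
    · -- (3,1)
      rw [de 3 1 _ _ e31]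
      rcases le_total (r 2) (r 3) with h | h
      · exact ⟨2, by norm_num, by norm_num, aux_sqrt2 _ _ _ h2.le (by clear * - h2 h3 h4 h5 h6 h; nlinarith)⟩
      · exact ⟨3, by norm_num, by norm_num, aux_sqrt2 _ _ _ h3.le (by clear * - h2 h3 h4 h5 h6 h; nlinarith)⟩
    · -- (4,2)
      rw [de 4 2 _ _ e42]
      rcases le_total (r 3) (r 4) with h | h
      · exact ⟨3, by norm_num, by norm_num, aux_sqrt2 _ _ _ h3.le (by clear * - h2 h3 h4 h5 h6 h; nlinarith)⟩
      · exact ⟨4, by norm_num, by norm_num, aux_sqrt2 _ _ _ h4.le (by clear * - h2 h3 h4 h5 h6 h; nlinarith)⟩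
    · -- (4,5)
      rw [nsym, de 5 4 _ _ e54]
      rcases le_total (r 4) (r 5) with h | h
      · exact ⟨4, by norm_num, by norm_num, aux_sqrt2 _ _ _ h4.le (by clear * - h2 h3 h4 h5 h6 h; nlinarith)⟩
      · exact ⟨5, by norm_num, by norm_num, aux_sqrt2 _ _ _ h5.le (by clear * - h2 h3 h4 h5 h6 h; nlinarith)⟩
    · -- (4,6)
      rw [nsym, de 6 4 _ _ e64]
      rcases le_total (r 4) (r 6) with h | h
      · exact ⟨4, by norm_num, by norm_num, aux_sqrt2 _ _ _ h4.le (by clear * - h2 h3 h4 h5 h6 h; nlinarith)⟩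
      · exact ⟨6, by norm_num, by norm_num, aux_sqrt2 _ _ _ h6.le (by clear * - h2 h3 h4 h5 h6 h; nlinarith)⟩
    · -- (5,2)
      rw [de 5 2 _ _ e52]
      rcases le_total (r 2) (r 5) with h | h
      · exact ⟨2, by norm_num, by norm_num, aux_sqrt2 _ _ _ h2.le (by clear * - h2 h3 h4 h5 h6 h; nlinarith)⟩
      · exact ⟨5, by norm_num, by norm_num, aux_sqrt2 _ _ _ h5.le (by clear * - h2 h3 h4 h5 h6 h; nlinarith)⟩
    · -- (5,4)
      rw [de 5 4 _ _ e54]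
      rcases le_total (r 4) (r 5) with h | h
      · exact ⟨4, by norm_num, by norm_num, aux_sqrt2 _ _ _ h4.le (by clear * - h2 h3 h4 h5 h6 h; nlinarith)⟩
      · exact ⟨5, by norm_num, by norm_num, aux_sqrt2 _ _ _ h5.le (by clear * - h2 h3 h4 h5 h6 h; nlinarith)⟩
    · -- (5,6)
      rw [nsym, de 6 5 _ _ e65]
      rcases le_total (r 5) (r 6) with h | h
      · exact ⟨5, by norm_num, by norm_num, aux_sqrt2 _ _ _ h5.le (by clear * - h2 h3 h4 h5 h6 h; nlinarith)⟩
      · exact ⟨6, by norm_num, by norm_num, aux_sqrt2 _ _ _ h6.le (by clear * - h2 h3 h4 h5 h6 h; nlinarith)⟩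
    · -- (6,2)
      rw [de 6 2 _ _ e62]
      rcases le_total (r 2) (r 6) with h | h
      · exact ⟨2, by norm_num, by norm_num, aux_sqrt2 _ _ _ h2.le (by clear * - h2 h3 h4 h5 h6 h; nlinarith)⟩
      · exact ⟨6, by norm_num, by norm_num, aux_sqrt2 _ _ _ h6.le (by clear * - h2 h3 h4 h5 h6 h; nlinarith)⟩
    · -- (6,4)
      rw [de 6 4 _ _ e64]
      rcases le_total (r 4) (r 6) with h | h
      · exact ⟨4, by norm_num, by norm_num, aux_sqrt2 _ _ _ h4.le (by clear * - h2 h3 h4 h5 h6 h; nlinarith)⟩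
      · exact ⟨6, by norm_num, by norm_num, aux_sqrt2 _ _ _ h6.le (by clear * - h2 h3 h4 h5 h6 h; nlinarith)⟩
    · -- (6,5)
      rw [de 6 5 _ _ e65]
      rcases le_total (r 5) (r 6) with h | h
      · exact ⟨5, by norm_num, by norm_num, aux_sqrt2 _ _ _ h5.le (by clear * - h2 h3 h4 h5 h6 h; nlinarith)⟩
      · exact ⟨6, by norm_num, by norm_num, aux_sqrt2 _ _ _ h6.le (by clear * - h2 h3 h4 h5 h6 h; nlinarith)⟩
end

section
/- Let β ∈ (0, 1), let c ≥ c' > 0 be constants, let (ε_k) be a sequence in (0, 1) with ε_k → 0, and let (ρ_k) be nonnegative reals with c'·ε_k^{2β} ≤ W(ρ_k) ≤ c·ε_k^{2β} for all k. Then ρ_k/(2β·log(1/ε_k)) → 1 as k → ∞. -/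
open Filter Set Real

theorem distance_asymptotics
    (N : ℕ) (hN : 2 ≤ N)
    (W : ℝ → ℝ) (hW_cont : ContinuousOn W (Ici 0))
    (hW_pos : ∀ r ∈ Ici (0 : ℝ), 0 < W r)
    (A : ℝ) (hA : 0 < A)
    (hW_asym : Tendsto (fun r => r ^ (((N : ℝ) - 1) / 2) * Real.exp r * W r)
      atTop (nhds A))
    (β : ℝ) (hβ : β ∈ Ioo (0 : ℝ) 1)
    (c c' : ℝ) (hc' : 0 < c') (hcc : c' ≤ c)
    (ε : ℕ → ℝ) (hε : ∀ k, ε k ∈ Ioo (0 : ℝ) 1)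
    (hε0 : Tendsto ε atTop (nhds 0))
    (ρ : ℕ → ℝ) (hρ : ∀ k, 0 ≤ ρ k)
    (hlow : ∀ k, c' * ε k ^ (2 * β) ≤ W (ρ k))
    (hhigh : ∀ k, W (ρ k) ≤ c * ε k ^ (2 * β)) :
    Tendsto (fun k => ρ k / (2 * β * Real.log (1 / ε k))) atTop (nhds 1) := by
  obtain ⟨hβ0, hβ1⟩ := hβ
  set p : ℝ := ((N : ℝ) - 1) / 2 with hp_def
  have hN2 : (2:ℝ) ≤ (N:ℝ) := by exact_mod_cast hN
  have hp0 : 0 ≤ p := by rw [hp_def]; linarith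
  set L : ℕ → ℝ := fun k => 2 * β * Real.log (1 / ε k) with hL_def
  have hεpos : ∀ k, 0 < ε k := fun k => (hε k).1
  have hlogε : Tendsto (fun k => Real.log (ε k)) atTop atBot := by
    have h1 : Tendsto ε atTop (nhdsWithin 0 (Ioi 0)) :=
      tendsto_nhdsWithin_of_tendsto_nhds_of_eventually_within ε hε0
        (Eventually.of_forall fun k => hεpos k)
    exact Real.tendsto_log_nhdsGT_zero.comp h1
  have hL_top : Tendsto L atTop atTop := by
    have h2 : Tendsto (fun k => Real.log (1 / ε k)) atTop atTop := by
      simp only [one_div, Real.log_inv]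
      exact tendsto_neg_atBot_atTop.comp hlogε
    exact h2.const_mul_atTop (by positivity : (0:ℝ) < 2 * β)
  have hε2β : Tendsto (fun k => ε k ^ (2 * β)) atTop (nhds 0) := by
    have h3 : Tendsto (fun k => Real.exp (Real.log (ε k) * (2 * β))) atTop (nhds 0) := by
      apply Real.tendsto_exp_atBot.comp
      exact hlogε.atBot_mul_const (by positivity : (0:ℝ) < 2 * β)
    refine h3.congr fun k => ?_
    rw [Real.rpow_def_of_pos (hεpos k)]
  have hWρ0 : Tendsto (fun k => W (ρ k)) atTop (nhds 0) := by
    have hub : Tendsto (fun k => c * ε k ^ (2 * β)) atTop (nhds 0) := by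
      simpa using hε2β.const_mul c
    exact squeeze_zero (fun k => (hW_pos _ (hρ k)).le) (fun k => hhigh k) hub
  have hρ_top : Tendsto ρ atTop atTop := by
    rw [tendsto_atTop]
    intro b
    obtain ⟨x0, hx0mem, hx0min⟩ := (isCompact_Icc (a := (0:ℝ)) (b := max b 0)).exists_isMinOn
      ⟨0, by simp⟩ (hW_cont.mono (fun x hx => hx.1))
    have hm : 0 < W x0 := hW_pos x0 hx0mem.1
    filter_upwards [hWρ0.eventually_lt_const hm] with k hk
    by_contra h
    push_neg at h
    have hmem : ρ k ∈ Icc 0 (max b 0) := ⟨hρ k, le_trans h.le (le_max_left b 0)⟩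
    exact absurd (isMinOn_iff.mp hx0min (ρ k) hmem) (not_le.mpr hk)
  have hρ1 : ∀ᶠ k in atTop, 1 ≤ ρ k := hρ_top.eventually_ge_atTop 1
  set F : ℕ → ℝ := fun k => p * Real.log (ρ k) + ρ k + Real.log (W (ρ k)) with hF_def
  have hF : Tendsto F atTop (nhds (Real.log A)) := by
    have hg : Tendsto (fun k => (ρ k) ^ p * Real.exp (ρ k) * W (ρ k)) atTop (nhds A) :=
      hW_asym.comp hρ_top
    have hlog : Tendsto (fun k => Real.log ((ρ k) ^ p * Real.exp (ρ k) * W (ρ k))) atTop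
        (nhds (Real.log A)) := (Real.continuousAt_log hA.ne').tendsto.comp hg
    refine hlog.congr' ?_
    filter_upwards [hρ1] with k hk
    have hρk : (0:ℝ) < ρ k := lt_of_lt_of_le one_pos hk
    have hW : 0 < W (ρ k) := hW_pos _ (hρ k)
    have h1 : (0:ℝ) < (ρ k) ^ p := Real.rpow_pos_of_pos hρk p
    rw [Real.log_mul (by positivity) hW.ne', Real.log_mul h1.ne' (Real.exp_pos _).ne',
      Real.log_rpow hρk, Real.log_exp]
  set u : ℕ → ℝ := fun k => Real.log (W (ρ k)) - 2 * β * Real.log (ε k) with hu_def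
  have hu_bounds : ∀ k, Real.log c' ≤ u k ∧ u k ≤ Real.log c := by
    intro k
    have hε' : (0:ℝ) < ε k ^ (2 * β) := Real.rpow_pos_of_pos (hεpos k) _
    have hW : 0 < W (ρ k) := hW_pos _ (hρ k)
    constructor
    · have h1 : Real.log (c' * ε k ^ (2 * β)) ≤ Real.log (W (ρ k)) :=
        Real.log_le_log (mul_pos hc' hε') (hlow k)
      rw [Real.log_mul hc'.ne' hε'.ne', Real.log_rpow (hεpos k)] at h1
      simp only [hu_def]; linarith
    · have h1 : Real.log (W (ρ k)) ≤ Real.log (c * ε k ^ (2 * β)) :=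
        Real.log_le_log hW (hhigh k)
      rw [Real.log_mul (lt_of_lt_of_le hc' hcc).ne' hε'.ne', Real.log_rpow (hεpos k)] at h1
      simp only [hu_def]; linarith
  have key : ∀ k, ρ k - L k = F k - u k - p * Real.log (ρ k) := by
    intro k
    simp only [hF_def, hu_def, hL_def, one_div, Real.log_inv]
    ring
  have h1 : ∀ᶠ k in atTop, |F k - Real.log A| < 1 := by
    have := Metric.tendsto_nhds.mp hF 1 one_pos
    simpa [Real.dist_eq] using this
  set C0 : ℝ := |Real.log A| + 1 + max |Real.log c'| |Real.log c| with hC0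
  have hFu : ∀ᶠ k in atTop, |F k - u k| ≤ C0 := by
    filter_upwards [h1] with k hk
    obtain ⟨ha, hb⟩ := hu_bounds k
    have h2 : -(max |Real.log c'| |Real.log c|) ≤ u k := by
      have := neg_abs_le (Real.log c')
      have := le_max_left |Real.log c'| |Real.log c|
      linarith
    have h3 : u k ≤ max |Real.log c'| |Real.log c| := by
      have := le_abs_self (Real.log c)
      have := le_max_right |Real.log c'| |Real.log c|
      linarith
    have h4 : |F k| ≤ |Real.log A| + 1 := by
      have := abs_sub_abs_le_abs_sub (F k) (Real.log A)
      linarith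
    have h5 := abs_le.mp h4
    rw [abs_le]
    constructor <;> [skip; skip] <;> simp only [hC0] <;> linarith
  have hub2 : ∀ᶠ k in atTop, ρ k - L k ≤ C0 := by
    filter_upwards [hFu, hρ1] with k h1 h2
    have hlog : 0 ≤ Real.log (ρ k) := Real.log_nonneg h2
    have hk := key k
    have := abs_le.mp h1
    nlinarith [mul_nonneg hp0 hlog]
  have hρleL : ∀ᶠ k in atTop, ρ k ≤ 2 * L k := by
    filter_upwards [hub2, hL_top.eventually_ge_atTop C0] with k h1 h2; linarith
  have hlogρ : ∀ᶠ k in atTop, Real.log (ρ k) ≤ 2 * Real.sqrt 2 * Real.sqrt (L k) := by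
    filter_upwards [hρ1, hρleL] with k h1 h2
    have hρk : 0 < ρ k := lt_of_lt_of_le one_pos h1
    have e1 : Real.log (ρ k) ≤ 2 * Real.sqrt (ρ k) := by
      have h3 := Real.log_le_sub_one_of_pos (Real.sqrt_pos.mpr hρk)
      rw [Real.log_sqrt hρk.le] at h3
      linarith [Real.sqrt_nonneg (ρ k)]
    have e2 : Real.sqrt (ρ k) ≤ Real.sqrt (2 * L k) := Real.sqrt_le_sqrt h2
    rw [Real.sqrt_mul (by norm_num : (0:ℝ) ≤ 2)] at e2
    linarith
  set C1 : ℝ := 2 * Real.sqrt 2 * p with hC1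
  have habs : ∀ᶠ k in atTop, |ρ k - L k| ≤ C0 + C1 * Real.sqrt (L k) := by
    filter_upwards [hFu, hρ1, hlogρ] with k h1 h2 h3
    have hlognn : 0 ≤ Real.log (ρ k) := Real.log_nonneg h2
    have hk := key k
    obtain ⟨ha, hb⟩ := abs_le.mp h1
    rw [abs_le]
    constructor
    · have h4 : p * Real.log (ρ k) ≤ p * (2 * Real.sqrt 2 * Real.sqrt (L k)) :=
        mul_le_mul_of_nonneg_left h3 hp0
      have e : C1 * Real.sqrt (L k) = p * (2 * Real.sqrt 2 * Real.sqrt (L k)) := by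
        rw [hC1]; ring
      linarith
    · have h4 : 0 ≤ p * Real.log (ρ k) := mul_nonneg hp0 hlognn
      have e : 0 ≤ C1 * Real.sqrt (L k) := by
        rw [hC1]; positivity
      linarith
  have hLpos : ∀ᶠ k in atTop, 0 < L k := hL_top.eventually_gt_atTop 0
  have hdiv : Tendsto (fun k => (ρ k - L k) / L k) atTop (nhds 0) := by
    have t1 : Tendsto (fun k => C0 / L k) atTop (nhds 0) := tendsto_const_nhds.div_atTop hL_top
    have t2 : Tendsto (fun k => (L k) ^ (-(1/2) : ℝ)) atTop (nhds 0) :=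
      (tendsto_rpow_neg_atTop (by norm_num : (0:ℝ) < 1/2)).comp hL_top
    have hbound : Tendsto (fun k => C0 / L k + C1 * (L k) ^ (-(1/2) : ℝ)) atTop (nhds 0) := by
      simpa using t1.add (t2.const_mul C1)
    apply squeeze_zero_norm' ?_ hbound
    filter_upwards [habs, hLpos] with k h1 h2
    rw [Real.norm_eq_abs, abs_div, abs_of_pos h2]
    have e : Real.sqrt (L k) / L k = (L k) ^ (-(1/2) : ℝ) := by
      rw [Real.sqrt_eq_rpow, show (-(1/2) : ℝ) = 1/2 - 1 by norm_num, Real.rpow_sub h2,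
        Real.rpow_one]
    calc |ρ k - L k| / L k ≤ (C0 + C1 * Real.sqrt (L k)) / L k := by
          exact div_le_div_of_nonneg_right h1 h2.le
      _ = C0 / L k + C1 * ((L k) ^ (-(1/2) : ℝ)) := by
          rw [add_div, mul_div_assoc, e]
  have hfin : Tendsto (fun k => (ρ k - L k) / L k + 1) atTop (nhds 1) := by
    simpa using hdiv.add (tendsto_const_nhds (x := (1:ℝ)))
  have heq : (fun k => (ρ k - L k) / L k + 1) =ᶠ[atTop] fun k => ρ k / L k := by
    filter_upwards [hLpos] with k hk
    field_simp
    ring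
  exact Tendsto.congr' heq hfin
end
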